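/- Let r, N be natural numbers and let {f_i}_{i=1}^{rN} be an equal-norm Parseval frame for an N-dimensional Hilbert space H_N. Then {1, …, rN} can be partitioned into r sets each of which indexes a linearly independent spanning set (i.e., a basis) of H_N. -/

import Mathlib

open scoped InnerProductSpace

open Submodule Finset
set_option linter.unusedSectionVars false
section
variable (K : Type*) {V : Type*} {ι : Type*} [DivisionRing K] [AddCommGroup V] [Module K V]
  [Fintype ι] [DecidableEq ι] (f : ι → V)

noncomputable def SP (s : Finset ι) : Submodule K V := Submodule.span K (f '' ↑s)

instance instSPfd (s : Finset ι) : FiniteDimensional K (SP K f s) :=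
  FiniteDimensional.span_of_finite K ((s : Set ι).toFinite.image f)

variable {K f}

theorem SP_mono {s t : Finset ι} (h : s ⊆ t) : SP K f s ≤ SP K f t :=
  Submodule.span_mono (Set.image_mono h)

theorem SP_finrank_le (s : Finset ι) : Module.finrank K (SP K f s) ≤ s.card := by
  classical
  have h1 : SP K f s = Submodule.span K ↑(s.image f) := by rw [SP, Finset.coe_image]
  rw [h1]
  exact le_trans (finrank_span_finset_le_card (s.image f)) Finset.card_image_le

theorem mem_SP {i : ι} {s : Finset ι} (h : i ∈ s) : f i ∈ SP K f s :=
  Submodule.subset_span ⟨i, h, rfl⟩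

theorem SP_insert_eq {i : ι} {s : Finset ι} (h : f i ∈ SP K f s) :
    SP K f (insert i s) = SP K f s := by
  unfold SP
  rw [Finset.coe_insert, Set.image_insert_eq, Submodule.span_insert_eq_span h]

theorem SP_erase_eq {i : ι} {s : Finset ι} (hi : i ∈ s) (h : f i ∈ SP K f (s.erase i)) :
    SP K f s = SP K f (s.erase i) := by
  conv_lhs => rw [← Finset.insert_erase hi]
  exact SP_insert_eq h

-- dependent card bound
theorem SP_card_of_dep {s : Finset ι} {i : ι} (hi : i ∈ s) (h : f i ∈ SP K f (s.erase i)) :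
    Module.finrank K (SP K f s) + 1 ≤ s.card := by
  rw [SP_erase_eq hi h]
  have := SP_finrank_le (K := K) (f := f) (s.erase i)
  have hc : (s.erase i).card + 1 = s.card := Finset.card_erase_add_one hi
  omega

-- strict finrank increase
theorem SP_finrank_lt {s : Finset ι} {i : ι} (h : f i ∉ SP K f s) :
    Module.finrank K (SP K f s) < Module.finrank K (SP K f (insert i s)) := by
  apply Submodule.finrank_lt_finrank_of_lt
  refine lt_of_le_of_ne (SP_mono (Finset.subset_insert i s)) ?_
  intro he
  exact h (he ▸ mem_SP (Finset.mem_insert_self i s))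
end
section
open Submodule Finset
set_option linter.unusedSectionVars false
variable {K : Type*} {V : Type*} {ι : Type*} [DivisionRing K] [AddCommGroup V] [Module K V]
  [Fintype ι] [DecidableEq ι] {f : ι → V} {r : ℕ}

/-- part `j` of the partition encoded by `g` -/
def Pt (g : ι → Fin r) (j : Fin r) : Finset ι := Finset.univ.filter (fun i => g i = j)

theorem mem_Pt {g : ι → Fin r} {j : Fin r} {i : ι} : i ∈ Pt g j ↔ g i = j := by
  simp [Pt]

theorem self_mem_Pt {g : ι → Fin r} (i : ι) : i ∈ Pt g (g i) := mem_Pt.2 rfl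

theorem Pt_update (g : ι → Fin r) (i : ι) (j j' : Fin r) :
    Pt (Function.update g i j) j' =
      if j' = j then insert i ((Pt g j').erase i) else (Pt g j').erase i := by
  ext x
  by_cases hx : x = i <;> by_cases hj : j' = j <;>
    simp [mem_Pt, Function.update, hx, hj, Finset.mem_erase] <;> tauto

noncomputable def dsum (f : ι → V) (K : Type*) [DivisionRing K] [Module K V]
    (g : ι → Fin r) : ℕ := ∑ j, Module.finrank K (SP K f (Pt g j))

/-- `i` is a dependent witness in its part -/
def wit (f : ι → V) (K : Type*) [DivisionRing K] [Module K V] (g : ι → Fin r) (i : ι) : Prop :=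
  f i ∈ SP K f ((Pt g (g i)).erase i)

theorem F1 {g : ι → Fin r} (hg : ∀ g' : ι → Fin r, dsum f K g' ≤ dsum f K g)
    {i : ι} (hw : wit f K g i) (j : Fin r) : f i ∈ SP K f (Pt g j) := by
  by_contra hns
  have hji : j ≠ g i := by
    intro h; exact hns (h ▸ mem_SP (self_mem_Pt i))
  have hlt : dsum f K g < dsum f K (Function.update g i j) := by
    apply Finset.sum_lt_sum
    · intro j' _
      rw [Pt_update]
      by_cases h1 : j' = j
      · rw [if_pos h1]
        have hie : i ∉ Pt g j' := fun hm => hji (h1 ▸ (mem_Pt.1 hm).symm)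
        rw [Finset.erase_eq_of_notMem hie]
        exact le_of_lt (SP_finrank_lt (h1 ▸ hns))
      · rw [if_neg h1]
        by_cases h2 : j' = g i
        · subst h2
          rw [← SP_erase_eq (self_mem_Pt i) hw]
        · have hie : i ∉ Pt g j' := fun hm => h2 (mem_Pt.1 hm).symm
          rw [Finset.erase_eq_of_notMem hie]
    · refine ⟨j, Finset.mem_univ j, ?_⟩
      rw [Pt_update, if_pos rfl]
      have hie : i ∉ Pt g j := fun hm => hji (mem_Pt.1 hm).symm
      rw [Finset.erase_eq_of_notMem hie]
      exact SP_finrank_lt hns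
  exact absurd (hg _) (not_le.2 hlt)

/-- single move -/
def Mv (f : ι → V) (K : Type*) [DivisionRing K] [Module K V] (g g' : ι → Fin r) : Prop :=
  ∃ i j, wit f K g i ∧ g' = Function.update g i j

def Reach (f : ι → V) (K : Type*) [DivisionRing K] [Module K V] (g₀ g : ι → Fin r) : Prop :=
  Relation.ReflTransGen (Mv f K) g₀ g

theorem spans_invariant {g₀ : ι → Fin r} (hg₀ : ∀ g' : ι → Fin r, dsum f K g' ≤ dsum f K g₀)
    {g : ι → Fin r} (h : Reach f K g₀ g) : ∀ j, SP K f (Pt g j) = SP K f (Pt g₀ j) := by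
  induction h with
  | refl => intro j; rfl
  | @tail gb gc hr hmv ih =>
    obtain ⟨i, j, hw, rfl⟩ := hmv
    have hmax : ∀ g' : ι → Fin r, dsum f K g' ≤ dsum f K gb := by
      intro g'
      have : dsum f K gb = dsum f K g₀ := by
        unfold dsum; exact Finset.sum_congr rfl fun j' _ => by rw [ih j']
      rw [this]; exact hg₀ g'
    intro j'
    rw [← ih j']
    rw [Pt_update]
    by_cases h1 : j' = j
    · rw [if_pos h1]
      by_cases h2 : j = gb i
      · subst h2 h1
        rw [Finset.insert_erase (self_mem_Pt i)]
      · have hie : i ∉ Pt gb j' := fun hm => h2 (((mem_Pt.1 hm).trans h1).symm)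
        rw [Finset.erase_eq_of_notMem hie, SP_insert_eq (h1 ▸ F1 hmax hw j)]
    · rw [if_neg h1]
      by_cases h2 : j' = gb i
      · subst h2
        rw [← SP_erase_eq (self_mem_Pt i) hw]
      · have hie : i ∉ Pt gb j' := fun hm => h2 (mem_Pt.1 hm).symm
        rw [Finset.erase_eq_of_notMem hie]
end
section
open Submodule Finset
set_option linter.unusedSectionVars false
variable {K : Type*} {V : Type*} {ι : Type*} [DivisionRing K] [AddCommGroup V] [Module K V]
  [Fintype ι] [DecidableEq ι] {f : ι → V} {r : ℕ}

theorem exists_circuit {i : ι} {s : Finset ι} (h : f i ∈ SP K f s) :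
    ∃ Γ, Γ ⊆ s ∧ f i ∈ SP K f Γ ∧ ∀ y ∈ Γ, f y ∈ SP K f (insert i (Γ.erase y)) := by
  obtain ⟨Γ, hΓs, hmin⟩ := exists_minimal_le_of_wellFoundedLT (fun t : Finset ι => f i ∈ SP K f t) s h
  refine ⟨Γ, hΓs, hmin.1, fun y hy => ?_⟩
  have hnot : f i ∉ SP K f (Γ.erase y) := by
    intro hc
    exact absurd (hmin.2 hc (Finset.erase_subset y Γ) hy) (Finset.notMem_erase y Γ)
  have himg : (f '' ↑Γ : Set V) = insert (f y) (f '' ↑(Γ.erase y)) := by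
    conv_lhs => rw [← Finset.insert_erase hy]
    rw [Finset.coe_insert, Set.image_insert_eq]
  have h1 : f i ∈ span K (insert (f y) (f '' ↑(Γ.erase y))) := by
    rw [← himg]; exact hmin.1
  have h2 := mem_span_insert_exchange h1 hnot
  have himg2 : (f '' ↑(insert i (Γ.erase y)) : Set V) = insert (f i) (f '' ↑(Γ.erase y)) := by
    rw [Finset.coe_insert, Set.image_insert_eq]
  rw [SP, himg2]
  exact h2

noncomputable def Dset (f : ι → V) (K : Type*) [DivisionRing K] [Module K V]
    (g₀ : ι → Fin r) : Finset ι :=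
  Set.Finite.toFinset (Set.toFinite {i | ∃ g, Reach f K g₀ g ∧ wit f K g i})

theorem mem_Dset {g₀ : ι → Fin r} {i : ι} :
    i ∈ Dset f K g₀ ↔ ∃ g, Reach f K g₀ g ∧ wit f K g i := by
  simp [Dset]

theorem circuit_in_D {g₀ g : ι → Fin r} (hr : Reach f K g₀ g) {i : ι} (hw : wit f K g i) :
    ∃ Γ, Γ ⊆ (Pt g (g i)).erase i ∧ Γ ⊆ Dset f K g₀ ∧ f i ∈ SP K f Γ := by
  obtain ⟨Γ, hΓs, hiΓ, hcirc⟩ := exists_circuit hw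
  refine ⟨Γ, hΓs, fun y hy => ?_, hiΓ⟩
  have hyi : y ≠ i := Finset.ne_of_mem_erase (hΓs hy)
  have hgy : g y = g i := mem_Pt.1 (Finset.mem_of_mem_erase (hΓs hy))
  have hwy : wit f K g y := by
    unfold wit
    rw [hgy]
    refine SP_mono ?_ (hcirc y hy)
    intro x hx
    rcases Finset.mem_insert.1 hx with rfl | hx'
    · exact Finset.mem_erase.2 ⟨hyi.symm, self_mem_Pt x⟩
    · exact Finset.mem_erase.2 ⟨Finset.ne_of_mem_erase hx',
        Finset.mem_of_mem_erase (hΓs (Finset.mem_of_mem_erase hx'))⟩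
  exact mem_Dset.2 ⟨g, hr, hwy⟩

noncomputable def Sj (f : ι → V) (K : Type*) [DivisionRing K] [Module K V]
    (g₀ : ι → Fin r) (j : Fin r) (g : ι → Fin r) : Submodule K V :=
  SP K f (Dset f K g₀ ∩ Pt g j)

instance (g₀ : ι → Fin r) (j : Fin r) (g : ι → Fin r) :
    FiniteDimensional K (Sj f K g₀ j g) :=
  instSPfd K f _

theorem S_self_eq {g₀ g : ι → Fin r} (hr : Reach f K g₀ g) {i : ι} (hw : wit f K g i) :
    Sj f K g₀ (g i) g = SP K f ((Dset f K g₀ ∩ Pt g (g i)).erase i) := by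
  obtain ⟨Γ, hΓs, hΓD, hiΓ⟩ := circuit_in_D hr hw
  have hiD : i ∈ Dset f K g₀ := mem_Dset.2 ⟨g, hr, hw⟩
  have hΓsub : Γ ⊆ (Dset f K g₀ ∩ Pt g (g i)).erase i := by
    intro y hy
    exact Finset.mem_erase.2 ⟨Finset.ne_of_mem_erase (hΓs hy),
      Finset.mem_inter.2 ⟨hΓD hy, Finset.mem_of_mem_erase (hΓs hy)⟩⟩
  exact SP_erase_eq (Finset.mem_inter.2 ⟨hiD, self_mem_Pt i⟩) (SP_mono hΓsub hiΓ)

theorem Smove {g₀ : ι → Fin r} (hg₀ : ∀ g' : ι → Fin r, dsum f K g' ≤ dsum f K g₀)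
    {g g' : ι → Fin r} (hr : Reach f K g₀ g) (hmv : Mv f K g g') (j' : Fin r) :
    Sj f K g₀ j' g ≤ Sj f K g₀ j' g' := by
  obtain ⟨i, j, hw, rfl⟩ := hmv
  unfold Sj
  rw [Pt_update]
  by_cases h1 : j' = j
  · rw [if_pos h1]
    refine SP_mono (Finset.inter_subset_inter (le_refl _) ?_)
    by_cases h2 : i ∈ Pt g j'
    · rw [Finset.insert_erase h2]
    · rw [Finset.erase_eq_of_notMem h2]
      exact Finset.subset_insert i _
  · rw [if_neg h1]
    by_cases h2 : j' = g i
    · subst h2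
      have heq : Dset f K g₀ ∩ (Pt g (g i)).erase i = (Dset f K g₀ ∩ Pt g (g i)).erase i := by
        ext x
        simp [Finset.mem_erase, Finset.mem_inter]
        tauto
      rw [heq, ← S_self_eq hr hw]
      exact le_refl _
    · have hie : i ∉ Pt g j' := fun hm => h2 (mem_Pt.1 hm).symm
      rw [Finset.erase_eq_of_notMem hie]

theorem Mv_symm {g₀ : ι → Fin r} (hg₀ : ∀ g' : ι → Fin r, dsum f K g' ≤ dsum f K g₀)
    {g g' : ι → Fin r} (hr : Reach f K g₀ g) (hmv : Mv f K g g') : Mv f K g' g := by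
  obtain ⟨i, j, hw, rfl⟩ := hmv
  have hmax : ∀ g'' : ι → Fin r, dsum f K g'' ≤ dsum f K g := by
    intro g''
    have : dsum f K g = dsum f K g₀ := by
      unfold dsum
      exact Finset.sum_congr rfl fun j' _ => by rw [spans_invariant hg₀ hr j']
    rw [this]; exact hg₀ g''
  by_cases hj : j = g i
  · subst hj
    rw [Function.update_eq_self]
    exact ⟨i, g i, hw, (Function.update_eq_self i g).symm⟩
  · have hie : i ∉ Pt g j := fun hm => hj (mem_Pt.1 hm).symm
    have hgi' : Function.update g i j i = j := Function.update_self i j g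
    have hwit' : wit f K (Function.update g i j) i := by
      unfold wit
      rw [hgi', Pt_update, if_pos rfl, Finset.erase_eq_of_notMem hie, Finset.erase_insert hie]
      exact F1 hmax hw j
    refine ⟨i, g i, hwit', ?_⟩
    rw [Function.update_idem, Function.update_eq_self]

theorem S_invariant {g₀ : ι → Fin r} (hg₀ : ∀ g' : ι → Fin r, dsum f K g' ≤ dsum f K g₀)
    {g : ι → Fin r} (h : Reach f K g₀ g) (j : Fin r) : Sj f K g₀ j g = Sj f K g₀ j g₀ := by
  induction h with
  | refl => rfl
  | @tail gb gc hr hmv ih =>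
    rw [← ih]
    refine le_antisymm ?_ (Smove hg₀ hr hmv j)
    exact Smove hg₀ (hr.tail hmv) (Mv_symm hg₀ hr hmv) j

theorem key_mem {g₀ : ι → Fin r} (hg₀ : ∀ g' : ι → Fin r, dsum f K g' ≤ dsum f K g₀)
    {i : ι} (hi : i ∈ Dset f K g₀) (j : Fin r) : f i ∈ Sj f K g₀ j g₀ := by
  obtain ⟨g, hr, hw⟩ := mem_Dset.1 hi
  have main : ∀ g' : ι → Fin r, Reach f K g₀ g' → wit f K g' i → g' i = j → f i ∈ Sj f K g₀ j g₀ := by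
    intro g' hr' hw' hgi
    obtain ⟨Γ, hΓs, hΓD, hiΓ⟩ := circuit_in_D hr' hw'
    have : Γ ⊆ Dset f K g₀ ∩ Pt g' (g' i) :=
      fun y hy => Finset.mem_inter.2 ⟨hΓD hy, Finset.mem_of_mem_erase (hΓs hy)⟩
    have hmem : f i ∈ Sj f K g₀ (g' i) g' := SP_mono this hiΓ
    rw [S_invariant hg₀ hr', hgi] at hmem
    exact hmem
  by_cases hj : g i = j
  · exact main g hr hw hj
  · have hmax : ∀ g'' : ι → Fin r, dsum f K g'' ≤ dsum f K g := by
      intro g''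
      have : dsum f K g = dsum f K g₀ := by
        unfold dsum
        exact Finset.sum_congr rfl fun j' _ => by rw [spans_invariant hg₀ hr j']
      rw [this]; exact hg₀ g''
    have hie : i ∉ Pt g j := fun hm => hj (mem_Pt.1 hm)
    have hgi' : Function.update g i j i = j := Function.update_self i j g
    have hwit' : wit f K (Function.update g i j) i := by
      unfold wit
      rw [hgi', Pt_update, if_pos rfl, Finset.erase_eq_of_notMem hie, Finset.erase_insert hie]
      exact F1 hmax hw j
    exact main _ (hr.tail ⟨i, j, hw, rfl⟩) hwit' hgi'
end
section
open Submodule Finset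
set_option linter.unusedSectionVars false
variable {K : Type*} {V : Type*} {ι : Type*} [DivisionRing K] [AddCommGroup V] [Module K V]
  [Fintype ι] [DecidableEq ι] {f : ι → V} {r : ℕ}

theorem li_of_no_wit {g : ι → Fin r} {j : Fin r} (h : ∀ i ∈ Pt g j, ¬ wit f K g i) :
    LinearIndependent K (({i | g i = j} : Set ι).restrict f) := by
  rw [linearIndependent_iff_notMem_span]
  rintro ⟨a, ha⟩ hmem
  have haPt : a ∈ Pt g j := mem_Pt.2 ha
  apply h a haPt
  unfold wit
  have himg : (Set.restrict {i | g i = j} f) '' (Set.univ \ {⟨a, ha⟩}) =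
      f '' ↑((Pt g (g a)).erase a) := by
    ext v
    constructor
    · rintro ⟨⟨x, hx⟩, ⟨-, hne⟩, rfl⟩
      refine ⟨x, ?_, rfl⟩
      rw [Finset.coe_erase]
      refine ⟨?_, ?_⟩
      · rw [Finset.mem_coe, mem_Pt, ha]; exact hx
      · simp only [Set.mem_singleton_iff]
        intro hxa
        exact hne (by simp [hxa])
    · rintro ⟨x, hx, rfl⟩
      rw [Finset.coe_erase] at hx
      obtain ⟨hx1, hx2⟩ := hx
      have hgx : g x = j := by rw [← ha]; exact mem_Pt.1 (Finset.mem_coe.1 hx1)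
      exact ⟨⟨x, hgx⟩, ⟨Set.mem_univ _, by simpa using hx2⟩, rfl⟩
  rw [himg] at hmem
  exact hmem

theorem radoHorn (K : Type*) [DivisionRing K] [Module K V] {r : ℕ} (hr0 : 0 < r) (f : ι → V)
    (Hcount : ∀ s : Finset ι, s.card ≤ r * Module.finrank K (SP K f s)) :
    ∃ g : ι → Fin r, ∀ j, LinearIndependent K (({i | g i = j} : Set ι).restrict f) := by
  have : Nonempty (ι → Fin r) := ⟨fun _ => ⟨0, hr0⟩⟩
  obtain ⟨g₀, hg₀⟩ := Finite.exists_max (dsum f K (r := r))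
  refine ⟨g₀, fun j => ?_⟩
  by_contra hni
  have hex : ∃ i ∈ Pt g₀ j, wit f K g₀ i := by
    by_contra hno
    push_neg at hno
    exact hni (li_of_no_wit hno)
  obtain ⟨i₀, hi₀Pt, hw₀⟩ := hex
  have hgij : g₀ i₀ = j := mem_Pt.1 hi₀Pt
  set D := Dset f K g₀ with hD
  have hi₀D : i₀ ∈ D := mem_Dset.2 ⟨g₀, Relation.ReflTransGen.refl, hw₀⟩
  set W := SP K f D with hW
  -- W ≤ Sj for every part
  have hWle : ∀ j' : Fin r, W ≤ Sj f K g₀ j' g₀ := by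
    intro j'
    rw [hW, SP]
    apply Submodule.span_le.2
    rintro _ ⟨x, hx, rfl⟩
    exact key_mem hg₀ (Finset.mem_coe.1 hx) j'
  have hbound : ∀ j' : Fin r, Module.finrank K W ≤ (D ∩ Pt g₀ j').card := by
    intro j'
    exact le_trans (Submodule.finrank_mono (hWle j')) (SP_finrank_le _)
  have hstrict : Module.finrank K W + 1 ≤ (D ∩ Pt g₀ j).card := by
    obtain ⟨Γ, hΓs, hΓD, hiΓ⟩ := circuit_in_D (Relation.ReflTransGen.refl) hw₀
    rw [hgij] at hΓs
    have hΓsub : Γ ⊆ (D ∩ Pt g₀ j).erase i₀ := by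
      intro y hy
      exact Finset.mem_erase.2 ⟨Finset.ne_of_mem_erase (hΓs hy),
        Finset.mem_inter.2 ⟨hΓD hy, Finset.mem_of_mem_erase (hΓs hy)⟩⟩
    have hdep := SP_card_of_dep (Finset.mem_inter.2 ⟨hi₀D, hi₀Pt⟩) (SP_mono hΓsub hiΓ)
    have hm : Module.finrank K W ≤ Module.finrank K (SP K f (D ∩ Pt g₀ j)) :=
      Submodule.finrank_mono (hWle j)
    omega
  have hcardsum : D.card = ∑ j' : Fin r, (D ∩ Pt g₀ j').card := by
    rw [Finset.card_eq_sum_card_fiberwise (f := g₀) (t := Finset.univ) (fun x _ => Finset.mem_univ _)]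
    refine Finset.sum_congr rfl fun j' _ => ?_
    congr 1
    ext x
    simp [Pt, Finset.mem_filter, Finset.mem_inter]
  have hlt : r * Module.finrank K W < D.card := by
    rw [hcardsum]
    calc r * Module.finrank K W = ∑ _j' : Fin r, Module.finrank K W := by
          rw [Finset.sum_const, Finset.card_univ, Fintype.card_fin, smul_eq_mul]
      _ < ∑ j' : Fin r, (D ∩ Pt g₀ j').card := by
          apply Finset.sum_lt_sum (fun j' _ => hbound j')
          exact ⟨j, Finset.mem_univ j, by omega⟩
  have := Hcount D
  rw [← hW] at this
  omega
end
section
open Submodule Finset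
open scoped InnerProductSpace
set_option linter.unusedSectionVars false

set_option maxHeartbeats 1000000 in
theorem onb_parseval {E : Type*} [NormedAddCommGroup E] [InnerProductSpace ℂ E] {n : ℕ}
    (b : OrthonormalBasis (Fin n) ℂ E) (x : E) : ∑ k, ‖⟪b k, x⟫_ℂ‖ ^ 2 = ‖x‖ ^ 2 := by
  have h1 : ‖b.repr x‖ = ‖x‖ := b.repr.norm_map x
  rw [EuclideanSpace.norm_eq] at h1
  have h2 : ∀ k, ‖b.repr x k‖ = ‖⟪b k, x⟫_ℂ‖ := fun k => by rw [b.repr_apply_apply]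
  have h3 : (0:ℝ) ≤ ∑ k, ‖⟪b k, x⟫_ℂ‖ ^ 2 :=
    Finset.sum_nonneg fun k _ => sq_nonneg _
  calc ∑ k, ‖⟪b k, x⟫_ℂ‖ ^ 2 = (Real.sqrt (∑ k, ‖b.repr x k‖ ^ 2)) ^ 2 := by
        rw [Real.sq_sqrt (by positivity)]
        exact Finset.sum_congr rfl fun k _ => by rw [h2]
    _ = ‖x‖ ^ 2 := by rw [h1]

variable {H : Type*} [NormedAddCommGroup H] [InnerProductSpace ℂ H] [FiniteDimensional ℂ H]

theorem frame_count {r N : ℕ} (hdim : Module.finrank ℂ H = N)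
    (f : Fin (r * N) → H)
    (hParseval : ∀ x : H, ∑ i, ‖⟪x, f i⟫_ℂ‖ ^ 2 = ‖x‖ ^ 2)
    (hequal : ∀ i j, ‖f i‖ = ‖f j‖) (s : Finset (Fin (r * N))) :
    s.card ≤ r * Module.finrank ℂ (SP ℂ f s) := by
  rcases s.eq_empty_or_nonempty with rfl | ⟨i₀, hi₀⟩
  · simp
  · have hpos : 0 < r * N := i₀.pos
    have hr0 : 0 < r := by
      rcases Nat.eq_zero_or_pos r with rfl | h
      · simp at hpos
      · exact h
    have hN0 : 0 < N := by
      rcases Nat.eq_zero_or_pos N with rfl | h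
      · simp at hpos
      · exact h
    -- total norm sum
    set c : ℝ := ‖f i₀‖ ^ 2 with hc
    have hcnn : (0:ℝ) ≤ c := sq_nonneg _
    have hfi : ∀ i, ‖f i‖ ^ 2 = c := fun i => by rw [hc, hequal i i₀]
    have htot : (↑(r * N) : ℝ) * c = N := by
      have hb := stdOrthonormalBasis ℂ H
      have key : ∑ i, ‖f i‖ ^ 2 = (Module.finrank ℂ H : ℝ) := by
        have e1 : ∀ i, ‖f i‖ ^ 2 = ∑ k, ‖⟪hb k, f i⟫_ℂ‖ ^ 2 := fun i =>
          (onb_parseval hb (f i)).symm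
        rw [Finset.sum_congr rfl fun i _ => e1 i, Finset.sum_comm]
        have e2 : ∀ k, ∑ i, ‖⟪hb k, f i⟫_ℂ‖ ^ 2 = 1 := fun k => by
          rw [hParseval (hb k), hb.orthonormal.1 k, one_pow]
        rw [Finset.sum_congr rfl fun k _ => e2 k]
        simp
      rw [hdim] at key
      rw [← key, Finset.sum_congr rfl fun i _ => hfi i, Finset.sum_const, Finset.card_univ,
        Fintype.card_fin, nsmul_eq_mul]
    -- per-subset bound
    set W := SP ℂ f s with hW
    set m := Module.finrank ℂ W with hm
    set b := stdOrthonormalBasis ℂ W with hb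
    have key1 : ∀ i ∈ s, ∑ k, ‖⟪((b k : W) : H), f i⟫_ℂ‖ ^ 2 = c := by
      intro i hi
      have hfW : f i ∈ W := mem_SP hi
      have := onb_parseval b ⟨f i, hfW⟩
      have hnorm : ‖(⟨f i, hfW⟩ : W)‖ = ‖f i‖ := rfl
      rw [hnorm, hfi i] at this
      rw [← this]
      exact Finset.sum_congr rfl fun k _ => by rw [Submodule.coe_inner]
    have key2 : (s.card : ℝ) * c ≤ m := by
      have e3 : ∑ i ∈ s, (∑ k, ‖⟪((b k : W) : H), f i⟫_ℂ‖ ^ 2) = (s.card : ℝ) * c := by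
        rw [Finset.sum_congr rfl key1, Finset.sum_const, nsmul_eq_mul]
      rw [← e3, Finset.sum_comm]
      have e4 : ∀ k, ∑ i ∈ s, ‖⟪((b k : W) : H), f i⟫_ℂ‖ ^ 2 ≤ 1 := by
        intro k
        have h5 : ∑ i, ‖⟪((b k : W) : H), f i⟫_ℂ‖ ^ 2 = 1 := by
          rw [hParseval ((b k : W) : H)]
          have : ‖((b k : W) : H)‖ = ‖b k‖ := rfl
          rw [this, b.orthonormal.1 k, one_pow]
        rw [← h5]
        exact Finset.sum_le_sum_of_subset_of_nonneg (Finset.subset_univ s)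
          (fun i _ _ => sq_nonneg _)
      calc ∑ k, ∑ i ∈ s, ‖⟪((b k : W) : H), f i⟫_ℂ‖ ^ 2 ≤ ∑ _k : Fin m, (1:ℝ) :=
            Finset.sum_le_sum fun k _ => e4 k
        _ = m := by simp
    -- combine
    have hrc : (r : ℝ) * c = 1 := by
      have hNne : (N : ℝ) ≠ 0 := Nat.cast_ne_zero.2 (by omega)
      have : (N : ℝ) * ((r : ℝ) * c) = (N : ℝ) * 1 := by
        push_cast at htot ⊢
        nlinarith [htot]
      exact mul_left_cancel₀ hNne this
    have final : (s.card : ℝ) ≤ (r : ℝ) * m := by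
      have := mul_le_mul_of_nonneg_left key2 (le_of_lt (by positivity : (0:ℝ) < (r:ℝ)))
      calc (s.card : ℝ) = ((r : ℝ) * c) * (s.card : ℝ) := by rw [hrc, one_mul]
        _ = (r : ℝ) * ((s.card : ℝ) * c) := by ring
        _ ≤ (r : ℝ) * m := this
    exact_mod_cast final
end

/-- An equal-norm Parseval frame of `rN` vectors for an `N`-dimensional
Hilbert space can be partitioned into `r` sets each of which is a linearly independent
spanning set (a basis). -/
theorem equalNorm_parseval_partition_bases
    {H : Type*} [NormedAddCommGroup H] [InnerProductSpace ℂ H] [FiniteDimensional ℂ H]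
    (r N : ℕ) (hdim : Module.finrank ℂ H = N)
    (f : Fin (r * N) → H)
    (hParseval : ∀ x : H, ∑ i, ‖⟪x, f i⟫_ℂ‖ ^ 2 = ‖x‖ ^ 2)
    (hequal : ∀ i j, ‖f i‖ = ‖f j‖) :
    ∃ A : Fin r → Set (Fin (r * N)),
      (⋃ j, A j) = Set.univ ∧ Pairwise (Function.onFun Disjoint A) ∧
      ∀ j, LinearIndependent ℂ ((A j).restrict f) ∧
        Submodule.span ℂ (f '' A j) = ⊤ := by
  classical
  rcases Nat.eq_zero_or_pos r with rfl | hr0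
  · have hempty : IsEmpty (Fin (0 * N)) := by rw [Nat.zero_mul]; infer_instance
    refine ⟨fun j => j.elim0, ?_, fun j => j.elim0, fun j => j.elim0⟩
    ext i
    exact (hempty.false i).elim
  · have Hcount := frame_count hdim f hParseval hequal
    obtain ⟨g, hg⟩ := radoHorn ℂ hr0 f Hcount
    have hset : ∀ j, ({i | g i = j} : Set (Fin (r * N))) = ↑(Pt g j) := by
      intro j; ext i; simp [Pt]
    -- each part has at most N elements
    have htF : ∀ j, ({i | g i = j} : Set (Fin (r * N))).toFinset = Pt g j := by
      intro j; ext i; simp [Pt]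
    have hcardPt : ∀ j, Fintype.card ({i | g i = j} : Set (Fin (r * N))) = (Pt g j).card := by
      intro j; rw [← Set.toFinset_card, htF j]
    have hcardle : ∀ j, (Pt g j).card ≤ N := by
      intro j
      have h1 : Fintype.card ({i | g i = j} : Set (Fin (r * N))) ≤ Module.finrank ℂ H :=
        (hg j).fintype_card_le_finrank
      rw [hcardPt j, hdim] at h1
      exact h1
    have hsum : ∑ j, (Pt g j).card = r * N := by
      have := Finset.card_eq_sum_card_fiberwise
        (s := (Finset.univ : Finset (Fin (r * N)))) (t := Finset.univ) (f := g)
        (fun x _ => Finset.mem_univ (g x))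
      rw [Finset.card_univ, Fintype.card_fin] at this
      simpa [Pt] using this.symm
    have hcardeq : ∀ j, (Pt g j).card = N := by
      by_contra hcon
      push_neg at hcon
      obtain ⟨j₀, hj₀⟩ := hcon
      have hlt : ∑ j, (Pt g j).card < ∑ _j : Fin r, N := by
        apply Finset.sum_lt_sum (fun j _ => hcardle j)
        exact ⟨j₀, Finset.mem_univ j₀, lt_of_le_of_ne (hcardle j₀) hj₀⟩
      rw [hsum, Finset.sum_const, Finset.card_univ, Fintype.card_fin, smul_eq_mul] at hlt
      omega
    refine ⟨fun j => {i | g i = j}, ?_, ?_, fun j => ⟨hg j, ?_⟩⟩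
    · ext i
      simp only [Set.mem_iUnion, Set.mem_setOf_eq, Set.mem_univ, iff_true]
      exact ⟨g i, rfl⟩
    · intro j j' hne
      rw [Function.onFun, Set.disjoint_left]
      rintro i hi hi'
      exact hne (hi.symm.trans hi')
    · have hli' : LinearIndependent ℂ (({i | g i = j} : Set (Fin (r * N))).restrict f) := hg j
      have hcard : Fintype.card ({i | g i = j} : Set (Fin (r * N))) = Module.finrank ℂ H := by
        rw [hcardPt j, hcardeq j, hdim]
      have hspan := hli'.span_eq_top_of_card_eq_finrank' hcard
      rw [show Set.range (({i | g i = j} : Set (Fin (r * N))).restrict f) = f '' {i | g i = j} from Set.range_domRestrict f _] at hspan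
      exact hspan
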